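/- If M is a G-module and H ≤ G is a subgroup of finite index n with coset representatives g_1,...,g_n, then the map sending φ to Σ_j g_j ⊗ φ(g_j⁻¹) is an isomorphism of G-modules from Hom_{ℤ[H]}(ℤ[G], M) to ℤ[G] ⊗_{ℤ[H]} M. -/

import Mathlib

namespace GroupCoh

variable (G : Type) [Group G] (M : Type) [AddCommGroup M] [DistribMulAction G M]

/-- Inhomogeneous cochains: functions `G^m → M`. -/
abbrev C (m : ℕ) : Type := (Fin m → G) → M

/-- The standard inhomogeneous coboundary map. -/
def dPlus (m : ℕ) : C G M m →+ C G M (m + 1) :=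
  AddMonoidHom.mk' (fun f g =>
    g 0 • f (fun i => g i.succ) +
      ∑ j : Fin (m + 1), ((-1 : ℤ) ^ (j.val + 1)) • f (Fin.contractNth j (· * ·) g))
    (fun a b => by
      funext g
      simp only [Pi.add_apply, smul_add, Finset.sum_add_distrib]
      abel)

/-- Coboundaries in degree `r`. -/
def cobound : ∀ r : ℕ, AddSubgroup (C G M r)
  | 0 => ⊥
  | (r + 1) => (dPlus G M r).range

/-- Group cohomology `H^r(G, M)`, computed by the inhomogeneous cochain complex. -/
def Hcoh (r : ℕ) : Type :=
  (dPlus G M r).ker ⧸ (cobound G M r).addSubgroupOf (dPlus G M r).ker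

instance (r : ℕ) : AddCommGroup (Hcoh G M r) := inferInstanceAs (AddCommGroup (_ ⧸ _))

/-- Inhomogeneous chains: finitely supported functions `G^m →₀ M`. -/
abbrev Ch (m : ℕ) : Type := (Fin m → G) →₀ M

/-- The standard inhomogeneous boundary map on chains. -/
noncomputable def dChain (m : ℕ) : Ch G M (m + 1) →+ Ch G M m :=
  Finsupp.liftAddHom (fun γ =>
    AddMonoidHom.mk' (fun x =>
      Finsupp.single (fun i => γ i.succ) ((γ 0)⁻¹ • x) +
        (∑ j : Fin m, ((-1 : ℤ) ^ (j.val + 1)) •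
          Finsupp.single (Fin.contractNth j.castSucc (· * ·) γ) x) +
        ((-1 : ℤ) ^ (m + 1)) • Finsupp.single (fun i => γ i.castSucc) x)
      (fun a b => by
        simp only [smul_add, Finsupp.single_add, Finset.sum_add_distrib]
        abel))

/-- Cycles in degree `r`. -/
noncomputable def cyc : ∀ r : ℕ, AddSubgroup (Ch G M r)
  | 0 => ⊤
  | (r + 1) => (dChain G M r).ker

/-- Group homology `H_r(G, M)`, computed by the inhomogeneous chain complex. -/
noncomputable def Hhom (r : ℕ) : Type :=
  cyc G M r ⧸ ((dChain G M r).range.addSubgroupOf (cyc G M r))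

noncomputable instance (r : ℕ) : AddCommGroup (Hhom G M r) :=
  inferInstanceAs (AddCommGroup (_ ⧸ _))

end GroupCoh

section

variable (G : Type) [Group G] (H : Subgroup G)
variable (M : Type) [AddCommGroup M] [DistribMulAction H M]

/-- The coinduced module `Hom_{ℤ[H]}(ℤ[G], M)`, modelled as the group of `H`-equivariant
functions `G → M`. -/
def Coind : AddSubgroup (G → M) where
  carrier := {f : G → M | ∀ (h : H) (g : G), f ((h : G) * g) = h • f g}
  zero_mem' := fun h g => (smul_zero h).symm
  add_mem' := fun {a b} ha hb h g => by
    show a ((h : G) * g) + b ((h : G) * g) = h • (a g + b g)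
    rw [ha h g, hb h g, smul_add]
  neg_mem' := fun {a} ha h g => by
    show -a ((h : G) * g) = h • (-(a g))
    rw [ha h g, smul_neg]

/-- The `G`-action on the coinduced module, `(σ • f)(g) = f(gσ)`. -/
instance : DistribMulAction G (Coind G H M) where
  smul σ f := ⟨fun g => (f : G → M) (g * σ), fun h g => by
    simpa [mul_assoc] using f.2 h (g * σ)⟩
  one_smul f := Subtype.ext (funext fun g => by
    show (f : G → M) (g * 1) = (f : G → M) g
    rw [mul_one])
  mul_smul σ τ f := Subtype.ext (funext fun g => by
    show (f : G → M) (g * (σ * τ)) = (f : G → M) (g * σ * τ)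
    rw [mul_assoc])
  smul_zero σ := Subtype.ext (funext fun g => rfl)
  smul_add f₁ f₂ σ := Subtype.ext (funext fun g => rfl)

/-- The relations defining the induced module `ℤ[G] ⊗_{ℤ[H]} M` as a quotient of the free
`M`-valued finsupps on `G`: `gh ⊗ m = g ⊗ hm`. -/
noncomputable def indRel : AddSubgroup (G →₀ M) :=
  AddSubgroup.closure
    {x | ∃ (g : G) (h : H) (m : M),
      x = Finsupp.single (g * (h : G)) m - Finsupp.single g (h • m)}

/-- The induced module `ℤ[G] ⊗_{ℤ[H]} M`. -/
noncomputable def Ind : Type := (G →₀ M) ⧸ indRel G H M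

noncomputable instance : AddCommGroup (Ind G H M) := inferInstanceAs (AddCommGroup (_ ⧸ _))

/-- Left translation by `σ` on `G →₀ M`. -/
noncomputable def indSmulAux (σ : G) : (G →₀ M) →+ (G →₀ M) :=
  Finsupp.mapDomain.addMonoidHom (fun g => σ * g)

theorem indRel_le_comap (σ : G) :
    indRel G H M ≤ (indRel G H M).comap (indSmulAux G M σ) := by
  rw [indRel, AddSubgroup.closure_le]
  rintro x ⟨g, h, m, rfl⟩
  simp only [SetLike.mem_coe, AddSubgroup.mem_comap, map_sub, indSmulAux,
    Finsupp.mapDomain.addMonoidHom_apply, Finsupp.mapDomain_single]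
  exact AddSubgroup.subset_closure ⟨σ * g, h, m, by rw [mul_assoc]⟩

/-- The `G`-action on the induced module, induced by left translation. -/
noncomputable instance : DistribMulAction G (Ind G H M) where
  smul σ := QuotientAddGroup.map _ _ (indSmulAux G M σ) (indRel_le_comap G H M σ)
  one_smul x := by
    induction x using QuotientAddGroup.induction_on with
    | H a =>
      show QuotientAddGroup.mk (Finsupp.mapDomain (fun g => (1 : G) * g) a) = _
      have : (fun g : G => (1 : G) * g) = id := funext fun g => one_mul g
      rw [this, Finsupp.mapDomain_id]
  mul_smul σ τ x := by
    induction x using QuotientAddGroup.induction_on with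
    | H a =>
      show QuotientAddGroup.mk (Finsupp.mapDomain (fun g => σ * τ * g) a) =
        QuotientAddGroup.mk (Finsupp.mapDomain (fun g => σ * g)
          (Finsupp.mapDomain (fun g => τ * g) a))
      rw [← Finsupp.mapDomain_comp]
      have : ((fun g : G => σ * g) ∘ fun g : G => τ * g) = fun g : G => σ * τ * g :=
        funext fun g => by simp [mul_assoc]
      rw [this]
  smul_zero σ := map_zero _
  smul_add σ x y := map_add _ x y

end


/-- The map `φ ↦ Σ_j g_j ⊗ φ(g_j⁻¹)`, where the `g_j` are coset representatives of `H`
in `G`. -/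
noncomputable def coindToInd (G : Type) [Group G] (H : Subgroup G)
    (M : Type) [AddCommGroup M] [DistribMulAction H M] [Finite (G ⧸ H)]
    (φ : Coind G H M) : Ind G H M :=
  letI : Fintype (G ⧸ H) := Fintype.ofFinite _
  QuotientAddGroup.mk
    (∑ c : G ⧸ H, Finsupp.single (Quotient.out c) ((φ : G → M) ((Quotient.out c)⁻¹)))

section Aux
open scoped Classical

variable (G : Type) [Group G] (H : Subgroup G)
variable (M : Type) [AddCommGroup M] [DistribMulAction H M]

theorem Coind.smul_apply (σ : G) (f : Coind G H M) (x : G) :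
    ((σ • f : Coind G H M) : G → M) x = (f : G → M) (x * σ) := rfl

/-- `m ↦ (x ↦ if x*g ∈ H then ⟨x*g⟩ • m else 0)`, as an equivariant function. -/
noncomputable def Bsingle (g : G) : M →+ Coind G H M where
  toFun m := ⟨fun x => if hx : x * g ∈ H then (⟨x * g, hx⟩ : H) • m else 0, by
    intro h x
    show (if hx : (h : G) * x * g ∈ H then _ else _) = _
    have hc : (h : G) * x * g ∈ H ↔ x * g ∈ H := by
      rw [mul_assoc]; exact H.mul_mem_cancel_left h.2
    by_cases hx : x * g ∈ H
    · rw [dif_pos (hc.mpr hx)]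
      beta_reduce
      rw [dif_pos hx, ← mul_smul]
      congr 1
      ext
      simp [mul_assoc]
    · rw [dif_neg (fun hh => hx (hc.mp hh))]
      beta_reduce
      rw [dif_neg hx, smul_zero]⟩
  map_zero' := by
    apply Subtype.ext
    funext x
    show (if hx : x * g ∈ H then (⟨x * g, hx⟩ : H) • (0 : M) else 0) = ((0 : Coind G H M) : G → M) x
    split <;> simp
  map_add' a b := by
    apply Subtype.ext
    rw [AddSubgroup.coe_add]
    funext x
    show (if hx : x * g ∈ H then (⟨x * g, hx⟩ : H) • (a + b) else 0) =
      (if hx : x * g ∈ H then (⟨x * g, hx⟩ : H) • a else 0) +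
      (if hx : x * g ∈ H then (⟨x * g, hx⟩ : H) • b else 0)
    by_cases hx : x * g ∈ H
    · simp only [dif_pos hx, smul_add]
    · simp only [dif_neg hx, add_zero]

noncomputable def bAux : (G →₀ M) →+ Coind G H M :=
  Finsupp.liftAddHom fun g => Bsingle G H M g

theorem bAux_single (g : G) (m : M) :
    bAux G H M (Finsupp.single g m) = Bsingle G H M g m :=
  Finsupp.liftAddHom_apply_single _ _ _

theorem indRel_le_ker_bAux : indRel G H M ≤ (bAux G H M).ker := by
  rw [indRel, AddSubgroup.closure_le]
  rintro x ⟨g, h, m, rfl⟩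
  simp only [SetLike.mem_coe, AddMonoidHom.mem_ker, map_sub, bAux_single, sub_eq_zero]
  ext x
  show (if hx : x * (g * (h : G)) ∈ H then (⟨_, hx⟩ : H) • m else 0) =
    (if hx : x * g ∈ H then (⟨_, hx⟩ : H) • (h • m) else 0)
  have hc : x * (g * (h : G)) ∈ H ↔ x * g ∈ H := by
    rw [← mul_assoc]; exact H.mul_mem_cancel_right h.2
  by_cases hx : x * g ∈ H
  · rw [dif_pos (hc.mpr hx), dif_pos hx, ← mul_smul]
    congr 1
    ext
    simp [mul_assoc]
  · rw [dif_neg (fun hh => hx (hc.mp hh)), dif_neg hx]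

noncomputable def bInd : Ind G H M →+ Coind G H M :=
  QuotientAddGroup.lift _ (bAux G H M) (indRel_le_ker_bAux G H M)

theorem bInd_mk (a : G →₀ M) :
    bInd G H M (QuotientAddGroup.mk a) = bAux G H M a := rfl

theorem bAux_equivariant (σ : G) (a : G →₀ M) :
    bAux G H M (indSmulAux G M σ a) = σ • bAux G H M a := by
  induction a using Finsupp.induction with
  | zero => simp
  | single_add g m a _ _ ih =>
    rw [map_add, map_add, map_add, smul_add, ih]
    congr 1
    rw [indSmulAux, Finsupp.mapDomain.addMonoidHom_apply, Finsupp.mapDomain_single,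
      bAux_single, bAux_single]
    ext x
    rw [Coind.smul_apply]
    show (if hx : x * (σ * g) ∈ H then (⟨_, hx⟩ : H) • m else 0) =
      (if hx : x * σ * g ∈ H then (⟨_, hx⟩ : H) • m else 0)
    simp only [← mul_assoc]

theorem bInd_smul (σ : G) (y : Ind G H M) :
    bInd G H M (σ • y) = σ • bInd G H M y := by
  induction y using QuotientAddGroup.induction_on with
  | H a =>
    show bInd G H M (QuotientAddGroup.mk (indSmulAux G M σ a)) = _
    rw [bInd_mk, bInd_mk, bAux_equivariant]

variable [Finite (G ⧸ H)]

theorem coindToInd_add (a b : Coind G H M) :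
    coindToInd G H M (a + b) = coindToInd G H M a + coindToInd G H M b := by
  letI : Fintype (G ⧸ H) := Fintype.ofFinite _
  show QuotientAddGroup.mk _ = QuotientAddGroup.mk _ + QuotientAddGroup.mk _
  refine Eq.trans ?_ (QuotientAddGroup.mk_add (N := indRel G H M) _ _)
  rw [← Finset.sum_add_distrib]
  congr 1
  refine Finset.sum_congr rfl fun c _ => ?_
  rw [← Finsupp.single_add]
  rfl

/-- `coindToInd` as an additive hom. -/
noncomputable def Find : Coind G H M →+ Ind G H M :=
  AddMonoidHom.mk' (coindToInd G H M) (coindToInd_add G H M)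

theorem Find_bAux_single (g : G) (m : M) :
    Find G H M (bAux G H M (Finsupp.single g m)) = QuotientAddGroup.mk (Finsupp.single g m) := by
  letI : Fintype (G ⧸ H) := Fintype.ofFinite _
  rw [bAux_single]
  show QuotientAddGroup.mk
    (∑ c : G ⧸ H, Finsupp.single (Quotient.out c)
      ((Bsingle G H M g m : G → M) ((Quotient.out c)⁻¹))) = _
  have hsum : (∑ c : G ⧸ H, Finsupp.single (Quotient.out c)
      ((Bsingle G H M g m : G → M) ((Quotient.out c)⁻¹))) =
      Finsupp.single (Quotient.out (QuotientGroup.mk g : G ⧸ H))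
        ((Bsingle G H M g m : G → M) ((Quotient.out (QuotientGroup.mk g : G ⧸ H))⁻¹)) := by
    refine Fintype.sum_eq_single _ fun c hc => ?_
    have hnot : ¬ ((Quotient.out c)⁻¹ * g ∈ H) := by
      intro hmem
      apply hc
      have : (QuotientGroup.mk (Quotient.out c) : G ⧸ H) = QuotientGroup.mk g :=
        QuotientGroup.eq.mpr hmem
      rw [QuotientGroup.out_eq'] at this
      exact this
    show Finsupp.single _ (if hx : (Quotient.out c)⁻¹ * g ∈ H then _ else 0) = 0
    rw [dif_neg hnot, Finsupp.single_zero]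
  rw [hsum]
  set g0 := Quotient.out (QuotientGroup.mk g : G ⧸ H) with hg0
  have hmem : g0⁻¹ * g ∈ H := by
    refine QuotientGroup.eq.mp ?_
    rw [hg0, QuotientGroup.out_eq']
  have hval : ((Bsingle G H M g m : G → M) (g0⁻¹)) = (⟨g0⁻¹ * g, hmem⟩ : H) • m := by
    show (if hx : g0⁻¹ * g ∈ H then (⟨_, hx⟩ : H) • m else 0) = _
    rw [dif_pos hmem]
  rw [hval]
  refine (QuotientAddGroup.eq).mpr ?_
  have hgen : Finsupp.single (g0 * ((⟨g0⁻¹ * g, hmem⟩ : H) : G)) m -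
      Finsupp.single g0 ((⟨g0⁻¹ * g, hmem⟩ : H) • m) ∈ indRel G H M :=
    AddSubgroup.subset_closure ⟨g0, ⟨g0⁻¹ * g, hmem⟩, m, rfl⟩
  have : g0 * ((⟨g0⁻¹ * g, hmem⟩ : H) : G) = g := by
    simp
  rw [this] at hgen
  rw [neg_add_eq_sub]
  exact hgen

theorem Find_comp_bAux :
    (Find G H M).comp (bAux G H M) =
      (QuotientAddGroup.mk' (indRel G H M) : (G →₀ M) →+ Ind G H M) :=
  Finsupp.addHom_ext fun g m => Find_bAux_single G H M g m

theorem Find_bInd (y : Ind G H M) : Find G H M (bInd G H M y) = y := by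
  induction y using QuotientAddGroup.induction_on with
  | H a =>
    rw [bInd_mk]
    exact DFunLike.congr_fun (Find_comp_bAux G H M) a

theorem bInd_Find (φ : Coind G H M) : bInd G H M (Find G H M φ) = φ := by
  letI : Fintype (G ⧸ H) := Fintype.ofFinite (G ⧸ H)
  show bInd G H M (QuotientAddGroup.mk
    (∑ c : G ⧸ H, Finsupp.single (Quotient.out c) ((φ : G → M) ((Quotient.out c)⁻¹)))) = φ
  rw [bInd_mk, map_sum]
  ext x
  have hcoe : ((∑ c : G ⧸ H,
      bAux G H M (Finsupp.single (Quotient.out c) ((φ : G → M) ((Quotient.out c)⁻¹))) :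
      Coind G H M) : G → M) x =
      ∑ c : G ⧸ H, ((bAux G H M (Finsupp.single (Quotient.out c)
        ((φ : G → M) ((Quotient.out c)⁻¹))) : Coind G H M) : G → M) x := by
    have h1 : ((∑ c : G ⧸ H,
        bAux G H M (Finsupp.single (Quotient.out c) ((φ : G → M) ((Quotient.out c)⁻¹))) :
        Coind G H M) : G → M) =
        ∑ c : G ⧸ H, ((bAux G H M (Finsupp.single (Quotient.out c)
          ((φ : G → M) ((Quotient.out c)⁻¹))) : Coind G H M) : G → M) :=
      map_sum ((Coind G H M).subtype) _ Finset.univ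
    rw [h1, Finset.sum_apply]
  rw [hcoe]
  have hsum : ∀ c : G ⧸ H, ((bAux G H M (Finsupp.single (Quotient.out c)
      ((φ : G → M) ((Quotient.out c)⁻¹))) : Coind G H M) : G → M) x =
      if hx : x * Quotient.out c ∈ H then
        (⟨x * Quotient.out c, hx⟩ : H) • (φ : G → M) ((Quotient.out c)⁻¹) else 0 := by
    intro c
    rw [bAux_single]
    rfl
  simp only [hsum]
  rw [Fintype.sum_eq_single (QuotientGroup.mk x⁻¹ : G ⧸ H) (fun c hc => ?_)]
  · set t := Quotient.out (QuotientGroup.mk x⁻¹ : G ⧸ H) with ht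
    have hmem : x * t ∈ H := by
      have h1 : (QuotientGroup.mk t : G ⧸ H) = QuotientGroup.mk x⁻¹ := by
        rw [ht, QuotientGroup.out_eq']
      have h2 : t⁻¹ * x⁻¹ ∈ H := QuotientGroup.eq.mp h1
      have : (t⁻¹ * x⁻¹)⁻¹ ∈ H := H.inv_mem h2
      simpa using this
    rw [dif_pos hmem]
    have htinv : t⁻¹ = ((⟨x * t, hmem⟩ : H) : G)⁻¹ * x := by
      simp [mul_assoc]
    rw [htinv]
    have := φ.2 (⟨x * t, hmem⟩ : H)⁻¹ x
    rw [show (((⟨x * t, hmem⟩ : H)⁻¹ : H) : G) = ((⟨x * t, hmem⟩ : H) : G)⁻¹ from rfl] at this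
    rw [this, ← mul_smul, mul_inv_cancel, one_smul]
  · have hnot : ¬ (x * Quotient.out c ∈ H) := by
      intro hmem
      apply hc
      have h2 : (Quotient.out c)⁻¹ * x⁻¹ ∈ H := by
        have : (x * Quotient.out c)⁻¹ ∈ H := H.inv_mem hmem
        simpa [mul_inv_rev] using this
      have : (QuotientGroup.mk (Quotient.out c) : G ⧸ H) = QuotientGroup.mk x⁻¹ :=
        QuotientGroup.eq.mpr h2
      rw [QuotientGroup.out_eq'] at this
      exact this
    rw [dif_neg hnot]

end Aux

/-- If `M` is an `H`-module and `H ≤ G` has finite index, then the map sending `φ` to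
`Σ_j g_j ⊗ φ(g_j⁻¹)` (where `g_1, …, g_n` are coset representatives of `H` in `G`) is an
isomorphism of `G`-modules from the coinduced module `Hom_{ℤ[H]}(ℤ[G], M)` to the induced
module `ℤ[G] ⊗_{ℤ[H]} M`. -/
theorem coinduced_iso_induced_of_finiteIndex (G : Type) [Group G] (H : Subgroup G)
    (M : Type) [AddCommGroup M] [DistribMulAction H M] [Finite (G ⧸ H)] :
    Function.Bijective (coindToInd G H M) ∧
    (∀ a b : Coind G H M,
      coindToInd G H M (a + b) = coindToInd G H M a + coindToInd G H M b) ∧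
    (∀ (σ : G) (φ : Coind G H M),
      coindToInd G H M (σ • φ) = σ • coindToInd G H M φ) := by
  have hFind : ∀ φ : Coind G H M, Find G H M φ = coindToInd G H M φ := fun _ => rfl
  refine ⟨Function.bijective_iff_has_inverse.mpr
      ⟨bInd G H M, fun φ => by rw [← hFind]; exact bInd_Find G H M φ,
        fun y => by rw [← hFind]; exact Find_bInd G H M y⟩,
    coindToInd_add G H M, fun σ φ => ?_⟩
  have hinj : Function.Injective (bInd G H M) :=
    Function.LeftInverse.injective (Find_bInd G H M)
  apply hinj
  rw [← hFind, ← hFind, bInd_Find, bInd_smul, bInd_Find]
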